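/- Let f : X → Y be a closed continuous map, and let B ⊆ X be an infinite set contained in the range of a sequence q such that f∘q = p where p is a nontrivial sequence converging to some point y ∈ Y with all terms distinct from y. If B is closed in X and f restricted to B is finite-to-one, then f[B] is an infinite closed subset of {p(n) : n ∈ ℕ}, contradicting convergence of p; hence no infinite subset of {q(n) : n ∈ ℕ} mapping injectively onto infinitely many terms of p is closed in X. -/
import Mathlib


open Filter Topology

/-- Let `f : X → Y` be a closed continuous map to a T1 space, `p` a nontrivial
sequence converging to `y` with all terms distinct from `y`, and `q` a sequence in `X`
covering `p`. Then no infinite subset of the range of `q` on which `f` is injective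
(so that it maps onto infinitely many terms of `p`) is closed in `X`. -/
theorem no_infinite_closed_subset_of_lift
    {X Y : Type*} [TopologicalSpace X] [TopologicalSpace Y] [T1Space Y]
    (f : X → Y) (hf : Continuous f) (hclosed : IsClosedMap f)
    (y : Y) (p : ℕ → Y) (hp : Tendsto p atTop (𝓝 y)) (hpy : ∀ n, p n ≠ y)
    (q : ℕ → X) (hq : ∀ n, f (q n) = p n) :
    ∀ B ⊆ Set.range q, B.Infinite → Set.InjOn f B → ¬ IsClosed B := by
  intro B hBq hBinf hinj hB
  have hfB : IsClosed (f '' B) := hclosed B hB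
  have hfBinf : (f '' B).Infinite := hBinf.image hinj
  have hy : y ∈ closure (f '' B) := by
    rw [mem_closure_iff_nhds]
    intro U hU
    by_contra h
    rw [Set.not_nonempty_iff_eq_empty] at h
    have hev : ∀ᶠ n in atTop, p n ∈ U := hp (mem_of_superset hU (fun _ h => h))
    obtain ⟨N, hN⟩ := eventually_atTop.mp hev
    have hsub : f '' B ⊆ p '' {n | n < N} := by
      rintro z ⟨b, hb, rfl⟩
      obtain ⟨n, rfl⟩ := hBq hb
      refine ⟨n, ?_, (hq n).symm⟩
      by_contra hn
      simp only [Set.mem_setOf_eq, not_lt] at hn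
      have : p n ∈ U ∩ f '' B := ⟨hN n hn, ⟨q n, hb, hq n⟩⟩
      simp [h] at this
    exact hfBinf (((Set.finite_Iio N).image p).subset hsub)
  rw [hfB.closure_eq] at hy
  obtain ⟨b, hb, hfb⟩ := hy
  obtain ⟨n, rfl⟩ := hBq hb
  exact hpy n ((hq n).symm.trans hfb)
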